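/- Let G be the directed cycle on n vertices in which every edge has weight 1 − K/n, where K is an integer with 1 ≤ K < n, and let the thresholds θ_v be independent Uniform[0,1] random variables. For any seed set T of K distinct vertices, apply the integral influence vector x = 1_T; let ℓ₁, …, ℓ_K (with Σ_j ℓ_j = n) denote the lengths of the arcs of the cycle starting at each seed vertex and ending just before the next seed vertex. Then the expected size of the final activated set equals Σ_{j=1}^{K} Σ_{i=1}^{ℓ_j} (1 − K/n)^{i−1}, and this quantity is at most n(1 − (1 − K/n)^{n/K}). -/

import Mathlib

open MeasureTheory Finset
open scoped Classical
open Fin.NatCast Fin.CommRing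

/-- The final activated set of the linear influence process on a weighted digraph
with weights `wt`, thresholds `θ` and direct influences `x`: starting from `∅`, a
vertex `v` activates once the total weight of edges from the active set into `v`
plus `x v` reaches `θ v`; the process runs for `|W|` rounds. -/
noncomputable def finalSet {W : Type*} [Fintype W] (wt : W → W → ℝ) (θ x : W → ℝ) :
    Finset W :=
  (fun S => S ∪ Finset.univ.filter (fun v => θ v ≤ (∑ u ∈ S, wt u v) + x v))^[Fintype.card W] ∅

section Cyc
variable (n : ℕ) [NeZero n] (T : Finset (Fin n))

/-- distance from `v` back to the nearest seed (0 if `v ∈ T`). -/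
noncomputable def dd (v : Fin n) : ℕ := sInf {k : ℕ | v - (k : Fin n) ∈ T}

/-- arc length starting at `t`. -/
noncomputable def alen (t : Fin n) : ℕ := sInf {k : ℕ | 0 < k ∧ t + (k : Fin n) ∈ T}

variable {n T}

lemma dd_set_nonempty (hT : T.Nonempty) (v : Fin n) :
    {k : ℕ | v - (k : Fin n) ∈ T}.Nonempty := by
  obtain ⟨s, hs⟩ := hT
  exact ⟨((v - s : Fin n) : ℕ), by simp [Fin.cast_val_eq_self, hs]⟩

lemma dd_mem (hT : T.Nonempty) (v : Fin n) : v - ((dd n T v : ℕ) : Fin n) ∈ T :=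
  Nat.sInf_mem (dd_set_nonempty hT v)

lemma dd_lt (hT : T.Nonempty) (v : Fin n) : dd n T v < n := by
  obtain ⟨s, hs⟩ := hT
  have h : dd n T v ≤ ((v - s : Fin n) : ℕ) :=
    Nat.sInf_le (by simp [Fin.cast_val_eq_self, hs])
  exact lt_of_le_of_lt h (Fin.is_lt _)

lemma dd_not_mem {v : Fin n} {j : ℕ} (hj : j < dd n T v) : v - (j : Fin n) ∉ T :=
  Nat.notMem_of_lt_sInf hj

lemma dd_eq_zero_iff (hT : T.Nonempty) {v : Fin n} : dd n T v = 0 ↔ v ∈ T := by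
  constructor
  · intro h
    have := dd_mem hT v
    simpa [h] using this
  · intro h
    exact Nat.eq_zero_of_le_zero (Nat.sInf_le (by simpa using h))

lemma dd_succ (hT : T.Nonempty) {v : Fin n} (hv : v ∉ T) :
    dd n T v = dd n T (v - 1) + 1 := by
  have h1 : dd n T v ≤ dd n T (v - 1) + 1 := by
    apply Nat.sInf_le
    have := dd_mem hT (v - 1)
    show v - ((dd n T (v-1) + 1 : ℕ) : Fin n) ∈ T
    push_cast
    rw [show v - ((dd n T (v-1) : ℕ) + 1 : Fin n) = v - 1 - (dd n T (v-1) : ℕ) by ring]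
    exact this
  have h0 : dd n T v ≠ 0 := by
    intro h; exact hv ((dd_eq_zero_iff hT).mp h)
  obtain ⟨m, hm⟩ := Nat.exists_eq_succ_of_ne_zero h0
  have h2 : dd n T (v - 1) ≤ m := by
    apply Nat.sInf_le
    have := dd_mem hT v
    rw [hm] at this
    show v - 1 - ((m : ℕ) : Fin n) ∈ T
    push_cast at this ⊢
    rw [show v - 1 - (m : Fin n) = v - ((m : Fin n) + 1) by ring]
    exact this
  omega

lemma alen_set_nonempty (t : Fin n) (ht : t ∈ T) :
    {k : ℕ | 0 < k ∧ t + (k : Fin n) ∈ T}.Nonempty :=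
  ⟨n, Nat.pos_of_ne_zero (NeZero.ne n), by simp [ht]⟩

lemma alen_mem {t : Fin n} (ht : t ∈ T) :
    0 < alen n T t ∧ t + ((alen n T t : ℕ) : Fin n) ∈ T :=
  Nat.sInf_mem (alen_set_nonempty t ht)

lemma alen_le {t : Fin n} (ht : t ∈ T) : alen n T t ≤ n :=
  Nat.sInf_le ⟨Nat.pos_of_ne_zero (NeZero.ne n), by simp [ht]⟩

lemma alen_not_mem {t : Fin n} {k : ℕ} (hk : 0 < k) (hk2 : k < alen n T t)
    (h : t + (k : Fin n) ∈ T) : False :=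
  Nat.notMem_of_lt_sInf hk2 ⟨hk, h⟩

lemma dd_add {t : Fin n} (ht : t ∈ T) {i : ℕ} (hi : i < alen n T t) :
    dd n T (t + (i : Fin n)) = i := by
  have hle : dd n T (t + (i : Fin n)) ≤ i := Nat.sInf_le (by simp [ht])
  by_contra h
  have hlt : dd n T (t + (i : Fin n)) < i := lt_of_le_of_ne hle h
  set j := dd n T (t + (i : Fin n)) with hj
  have hmem := dd_mem ⟨t, ht⟩ (t + (i : Fin n))
  rw [← hj] at hmem
  have : t + (i : Fin n) - (j : Fin n) = t + (((i - j : ℕ) : ℕ) : Fin n) := by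
    rw [Nat.cast_sub (le_of_lt hlt)]; ring
  rw [this] at hmem
  exact alen_not_mem (by omega) (by omega) hmem

end Cyc
section Cyc2
variable {n : ℕ} [NeZero n] {T : Finset (Fin n)}

lemma cast_inj_of_lt {i j : ℕ} (hi : i < n) (hj : j < n)
    (h : (i : Fin n) = (j : Fin n)) : i = j := by
  have := congrArg Fin.val h
  rwa [Fin.val_natCast, Fin.val_natCast, Nat.mod_eq_of_lt hi, Nat.mod_eq_of_lt hj] at this

lemma dd_lt_alen (hT : T.Nonempty) (v : Fin n) :
    dd n T v < alen n T (v - ((dd n T v : ℕ) : Fin n)) := by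
  set t := v - ((dd n T v : ℕ) : Fin n) with htdef
  have ht : t ∈ T := dd_mem hT v
  by_contra h
  push_neg at h
  have hA := alen_mem ht
  have hkey : v - (((dd n T v - alen n T t : ℕ) : ℕ) : Fin n) ∈ T := by
    rw [Nat.cast_sub h]
    have heq : v - ((dd n T v : Fin n) - (alen n T t : Fin n)) = t + (alen n T t : Fin n) := by
      rw [htdef]; ring
    rw [heq]
    exact hA.2
  have hle : dd n T v ≤ dd n T v - alen n T t := Nat.sInf_le hkey
  have hpos := hA.1
  omega

lemma univ_eq_biUnion (hT : T.Nonempty) :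
    (Finset.univ : Finset (Fin n)) =
      T.biUnion (fun t => (Finset.range (alen n T t)).image (fun i : ℕ => t + ((i : ℕ) : Fin n))) := by
  apply Finset.ext
  intro v
  constructor
  · intro _
    apply Finset.mem_biUnion.mpr
    refine ⟨v - ((dd n T v : ℕ) : Fin n), dd_mem hT v, ?_⟩
    apply Finset.mem_image.mpr
    exact ⟨dd n T v, Finset.mem_range.mpr (dd_lt_alen hT v), by ring⟩
  · intro _; exact Finset.mem_univ v

lemma sum_dd_eq {M : Type*} [AddCommMonoid M] (hT : T.Nonempty) (g : ℕ → M) :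
    (∑ v : Fin n, g (dd n T v)) =
      ∑ t ∈ T, ∑ i ∈ Finset.range (alen n T t), g i := by
  rw [univ_eq_biUnion hT, Finset.sum_biUnion]
  · apply Finset.sum_congr rfl
    intro t ht
    rw [Finset.sum_image]
    · exact Finset.sum_congr rfl fun i hi =>
        congrArg g (dd_add ht (Finset.mem_range.mp hi))
    · intro i hi j hj hij
      exact cast_inj_of_lt
        (lt_of_lt_of_le (Finset.mem_range.mp hi) (alen_le ht))
        (lt_of_lt_of_le (Finset.mem_range.mp hj) (alen_le ht))
        (add_left_cancel hij)
  · intro t ht t' ht' htt'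
    simp only [Finset.mem_coe] at ht ht'
    apply Finset.disjoint_left.mpr
    intro a ha ha'
    obtain ⟨i, hi, rfl⟩ := Finset.mem_image.mp ha
    obtain ⟨j, hj, hj2⟩ := Finset.mem_image.mp ha'
    have h1 : dd n T (t + ((i : ℕ) : Fin n)) = i := dd_add ht (Finset.mem_range.mp hi)
    have h2 : dd n T (t' + ((j : ℕ) : Fin n)) = j := dd_add ht' (Finset.mem_range.mp hj)
    rw [hj2, h1] at h2
    subst h2
    exact htt' (add_right_cancel hj2.symm)

end Cyc2

section Char
variable {n : ℕ} [NeZero n] {T : Finset (Fin n)} {w : ℝ} {θ : Fin n → ℝ}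

lemma finalSet_eq (hT : T.Nonempty) (hw : 0 ≤ w)
    (hθ : ∀ v, 0 < θ v ∧ θ v ≤ 1) :
    finalSet (fun u v : Fin n => if u = v - 1 then w else 0) θ
        (fun v => if v ∈ T then 1 else 0)
      = Finset.univ.filter (fun v => ∀ i < dd n T v, θ (v - ((i : ℕ) : Fin n)) ≤ w) := by
  set x : Fin n → ℝ := fun v => if v ∈ T then 1 else 0 with hx
  set f := fun S : Finset (Fin n) => S ∪ Finset.univ.filter
      (fun v => θ v ≤ (∑ u ∈ S, if u = v - 1 then (w:ℝ) else 0) + x v) with hf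
  have hsum : ∀ (S : Finset (Fin n)) (v : Fin n),
      (∑ u ∈ S, if u = v - 1 then w else 0) = if v - 1 ∈ S then w else 0 :=
    fun S v => Finset.sum_ite_eq' S (v - 1) (fun _ => w)
  have hsub : ∀ S, S ⊆ f S := fun S => Finset.subset_union_left
  have hmono : ∀ m k, m ≤ k → f^[m] ∅ ⊆ f^[k] ∅ := by
    intro m k hmk
    induction k with
    | zero => simpa [Nat.le_zero.mp hmk] using Finset.Subset.refl _
    | succ k ih =>
      rcases Nat.lt_or_ge m (k+1) with h | h
      · rw [Function.iterate_succ_apply']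
        exact (ih (by omega)).trans (hsub _)
      · have : m = k + 1 := by omega
        rw [this]
  have fwd : ∀ m, f^[m] ∅ ⊆
      Finset.univ.filter (fun v => ∀ i < dd n T v, θ (v - ((i:ℕ) : Fin n)) ≤ w) := by
    intro m
    induction m with
    | zero => simp
    | succ m ih =>
      rw [Function.iterate_succ_apply']
      intro v hv
      rcases Finset.mem_union.mp hv with h | h
      · exact ih h
      · have hv2 := (Finset.mem_filter.mp h).2
        rw [hsum] at hv2
        by_cases hvT : v ∈ T
        · refine Finset.mem_filter.mpr ⟨Finset.mem_univ _, ?_⟩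
          intro i hi
          rw [(dd_eq_zero_iff hT).mpr hvT] at hi; omega
        · rw [hx] at hv2
          simp only [if_neg hvT, add_zero] at hv2
          have hpred : v - 1 ∈ f^[m] ∅ ∧ θ v ≤ w := by
            by_cases hp : v - 1 ∈ f^[m] ∅
            · exact ⟨hp, by rwa [if_pos hp] at hv2⟩
            · rw [if_neg hp] at hv2
              exact absurd hv2 (not_le.mpr (hθ v).1)
          have hchain := (Finset.mem_filter.mp (ih hpred.1)).2
          refine Finset.mem_filter.mpr ⟨Finset.mem_univ _, ?_⟩
          have hddv : dd n T v = dd n T (v - 1) + 1 := dd_succ hT hvT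
          intro i hi
          cases i with
          | zero => simpa using hpred.2
          | succ j =>
            have hj : j < dd n T (v - 1) := by omega
            have hc := hchain j hj
            have heq : v - ((j + 1 : ℕ) : Fin n) = v - 1 - ((j:ℕ) : Fin n) := by
              push_cast; ring
            rw [heq]; exact hc
  have key : ∀ m (v : Fin n), dd n T v ≤ m →
      (∀ i < dd n T v, θ (v - ((i:ℕ) : Fin n)) ≤ w) → v ∈ f^[m+1] ∅ := by
    intro m
    induction m with
    | zero =>
      intro v hd _
      have hvT : v ∈ T := (dd_eq_zero_iff hT).mp (Nat.le_zero.mp hd)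
      show v ∈ f ∅
      rw [hf]
      apply Finset.mem_union_right
      refine Finset.mem_filter.mpr ⟨Finset.mem_univ _, ?_⟩
      simp [hx, hvT, (hθ v).2]
    | succ m ih =>
      intro v hd hc
      by_cases hvT : v ∈ T
      · have h0 : dd n T v = 0 := (dd_eq_zero_iff hT).mpr hvT
        exact hmono (m+1) (m + 2) (by omega) (ih v (by omega) (by rw [h0]; omega))
      · have hddv : dd n T v = dd n T (v - 1) + 1 := dd_succ hT hvT
        have hpred : v - 1 ∈ f^[m+1] ∅ := by
          apply ih (v - 1) (by omega)
          intro i hi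
          have hc2 := hc (i + 1) (by omega)
          have heq : v - ((i + 1 : ℕ) : Fin n) = v - 1 - ((i:ℕ) : Fin n) := by
            push_cast; ring
          rw [heq] at hc2; exact hc2
        rw [show m + 1 + 1 = (m+1) + 1 from rfl, Function.iterate_succ_apply']
        apply Finset.mem_union_right
        refine Finset.mem_filter.mpr ⟨Finset.mem_univ _, ?_⟩
        rw [hsum, if_pos hpred, hx]
        simp only [if_neg hvT, add_zero]
        have := hc 0 (by omega)
        simpa using this
  have hcard : finalSet (fun u v : Fin n => if u = v - 1 then w else 0) θ x = f^[n] ∅ := by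
    simp only [finalSet, Fintype.card_fin, hf]
    congr!
  rw [hcard]
  apply Finset.Subset.antisymm (fwd n)
  intro v hv
  have hc := (Finset.mem_filter.mp hv).2
  have hdlt : dd n T v < n := dd_lt hT v
  exact hmono (dd n T v + 1) n (by omega) (key (dd n T v) v le_rfl hc)

/-- On the directed cycle on `n` vertices with edge weights `1 - K/n` and i.i.d.
uniform thresholds, seeding a set `T` of `K` vertices integrally: if `len t` denotes
the length of the arc starting at the seed `t` and ending just before the next seed,
then the expected size of the final activated set is
`∑_{t ∈ T} ∑_{i=1}^{len t} (1 - K/n)^{i-1}`, which is at most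
`n (1 - (1 - K/n)^{n/K})`. -/
theorem stmt9 (n K : ℕ) (hK1 : 1 ≤ K) (hKn : K < n)
    (T : Finset (Fin n)) (hT : T.card = K) :
    let wt : Fin n → Fin n → ℝ :=
      fun u v => if ((u : ℕ) + 1) % n = (v : ℕ) then 1 - (K : ℝ) / n else 0
    let x : Fin n → ℝ := fun v => if v ∈ T then 1 else 0
    let μ : Measure (Fin n → ℝ) := Measure.pi fun _ : Fin n => volume.restrict (Set.Icc 0 1)
    let len : Fin n → ℕ := fun t => sInf {k : ℕ | 0 < k ∧ ∃ s ∈ T, ((t : ℕ) + k) % n = (s : ℕ)}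
    (∫ θ, ((finalSet wt θ x).card : ℝ) ∂μ)
        = (∑ t ∈ T, ∑ i ∈ Finset.range (len t), (1 - (K : ℝ) / n) ^ i) ∧
    (∑ t ∈ T, ∑ i ∈ Finset.range (len t), (1 - (K : ℝ) / n) ^ i)
        ≤ n * (1 - (1 - (K : ℝ) / n) ^ ((n : ℝ) / (K : ℝ))) := by
  intro wt x μ len
  haveI : NeZero n := ⟨by omega⟩
  have hn0 : (0:ℝ) < n := by exact_mod_cast Nat.pos_of_ne_zero (by omega)
  have hKpos : (0:ℝ) < K := by exact_mod_cast hK1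
  have hKn' : (K:ℝ) < n := by exact_mod_cast hKn
  set w : ℝ := 1 - (K:ℝ)/n with hwdef
  have hw1 : w < 1 := by
    rw [hwdef]; have : 0 < (K:ℝ)/n := by positivity
    linarith
  have hwpos : 0 < w := by
    rw [hwdef]
    have : (K:ℝ)/n < 1 := (div_lt_one hn0).mpr hKn'
    linarith
  have hw0 : 0 ≤ w := le_of_lt hwpos
  have hTne : T.Nonempty := Finset.card_pos.mp (by omega)
  -- rewrite wt
  have hval : ∀ (t : Fin n) (k : ℕ), ((t + ((k:ℕ) : Fin n) : Fin n) : ℕ) = ((t:ℕ) + k) % n := by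
    intro t k
    have h1 : (t + ((k:ℕ) : Fin n) : Fin n) = (((t:ℕ) + k : ℕ) : Fin n) := by
      push_cast [Fin.cast_val_eq_self]
      rfl
    rw [h1, Fin.val_natCast]
  have hwt : wt = fun u v : Fin n => if u = v - 1 then w else 0 := by
    funext u v
    show (if ((u:ℕ) + 1) % n = (v:ℕ) then w else 0) = _
    have hiff : (((u:ℕ) + 1) % n = (v:ℕ)) ↔ u = v - 1 := by
      constructor
      · intro h
        have : u + ((1:ℕ) : Fin n) = v := Fin.ext (by rw [hval u 1]; exact h)
        rw [← this]; push_cast; ring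
      · intro h
        have : u + ((1:ℕ) : Fin n) = v := by rw [h]; push_cast; ring
        rw [← this]; exact (hval u 1).symm
    by_cases h : u = v - 1
    · rw [if_pos h, if_pos (hiff.mpr h)]
    · rw [if_neg h, if_neg (fun hc => h (hiff.mp hc))]
  have hx : x = fun v => if v ∈ T then 1 else 0 := rfl
  have hlen : ∀ t : Fin n, len t = alen n T t := by
    intro t
    show sInf _ = sInf _
    congr 1
    ext k
    simp only [Set.mem_setOf_eq]
    constructor
    · rintro ⟨hk, s, hs, hsk⟩
      refine ⟨hk, ?_⟩
      have hts : t + ((k:ℕ) : Fin n) = s := Fin.ext (by rw [hval t k]; exact hsk)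
      rw [hts]; exact hs
    · rintro ⟨hk, h⟩
      exact ⟨hk, t + ((k:ℕ) : Fin n), h, (hval t k).symm⟩
  -- measure side
  set ν : Measure ℝ := volume.restrict (Set.Icc 0 1) with hν
  haveI hνprob : IsProbabilityMeasure ν :=
    ⟨by rw [hν, Measure.restrict_apply_univ, Real.volume_Icc]; norm_num⟩
  haveI : IsProbabilityMeasure μ := by
    show IsProbabilityMeasure (Measure.pi _)
    infer_instance
  have hν1 : ν (Set.Iic w) = ENNReal.ofReal w := by
    rw [hν, Measure.restrict_apply measurableSet_Iic]
    have : Set.Iic w ∩ Set.Icc 0 1 = Set.Icc 0 w := by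
      ext y
      simp only [Set.mem_inter_iff, Set.mem_Iic, Set.mem_Icc]
      constructor
      · rintro ⟨h1, h2, h3⟩; exact ⟨h2, h1⟩
      · rintro ⟨h1, h2⟩; exact ⟨h2, h1, le_trans h2 (le_of_lt hw1)⟩
    rw [this, Real.volume_Icc, sub_zero]
  set I : Fin n → Finset (Fin n) :=
    fun v => (Finset.range (dd n T v)).image (fun i : ℕ => v - ((i:ℕ) : Fin n)) with hI
  set B : Fin n → Set (Fin n → ℝ) :=
    fun v => Set.pi Set.univ (fun u => if u ∈ I v then Set.Iic w else Set.univ) with hB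
  have hBmeas : ∀ v, MeasurableSet (B v) := by
    intro v
    apply MeasurableSet.univ_pi
    intro u
    by_cases h : u ∈ I v
    · rw [if_pos h]; exact measurableSet_Iic
    · rw [if_neg h]; exact MeasurableSet.univ
  have hBmem : ∀ (θ : Fin n → ℝ) v,
      θ ∈ B v ↔ ∀ i < dd n T v, θ (v - ((i:ℕ) : Fin n)) ≤ w := by
    intro θ v
    rw [hB]
    simp only [Set.mem_univ_pi]
    constructor
    · intro h i hi
      have h2 := h (v - ((i:ℕ) : Fin n))
      rw [if_pos (Finset.mem_image.mpr ⟨i, Finset.mem_range.mpr hi, rfl⟩)] at h2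
      exact h2
    · intro h u
      by_cases hu : u ∈ I v
      · rw [if_pos hu]
        obtain ⟨i, hi, rfl⟩ := Finset.mem_image.mp hu
        exact h i (Finset.mem_range.mp hi)
      · rw [if_neg hu]; trivial
  have hIcard : ∀ v, (I v).card = dd n T v := by
    intro v
    rw [hI]
    rw [Finset.card_image_of_injOn, Finset.card_range]
    intro i hi j hj hij
    have h2 : ((i:ℕ) : Fin n) = ((j:ℕ) : Fin n) := sub_right_injective hij
    exact cast_inj_of_lt
      (lt_trans (Finset.mem_range.mp (Finset.mem_coe.mp hi)) (dd_lt hTne v))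
      (lt_trans (Finset.mem_range.mp (Finset.mem_coe.mp hj)) (dd_lt hTne v)) h2
  have hμB : ∀ v, μ (B v) = ENNReal.ofReal (w ^ dd n T v) := by
    intro v
    rw [hB]
    show Measure.pi _ _ = _
    rw [Measure.pi_pi]
    have hfac : ∀ u : Fin n, ν (if u ∈ I v then Set.Iic w else Set.univ)
        = if u ∈ I v then ENNReal.ofReal w else 1 := by
      intro u
      by_cases h : u ∈ I v
      · rw [if_pos h, if_pos h, hν1]
      · rw [if_neg h, if_neg h, measure_univ]
    rw [Finset.prod_congr rfl (fun u _ => hfac u), Finset.prod_ite, Finset.prod_const,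
      Finset.prod_const, one_pow, mul_one, Finset.filter_univ_mem, hIcard v,
      ← ENNReal.ofReal_pow hw0]
  -- good set
  set Gs : Set (Fin n → ℝ) := Set.pi Set.univ (fun _ => Set.Ioc (0:ℝ) 1) with hGs
  have hGmeas : MeasurableSet Gs := MeasurableSet.univ_pi (fun _ => measurableSet_Ioc)
  have hGone : μ Gs = 1 := by
    rw [hGs]
    show Measure.pi _ _ = _
    rw [Measure.pi_pi]
    have : ν (Set.Ioc (0:ℝ) 1) = 1 := by
      rw [hν, Measure.restrict_apply measurableSet_Ioc,
        Set.inter_eq_left.mpr Set.Ioc_subset_Icc_self, Real.volume_Ioc]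
      norm_num
    exact Finset.prod_eq_one (fun _ _ => this)
  have hGae : ∀ᵐ θ ∂μ, θ ∈ Gs := by
    rw [ae_iff]
    have hc : {θ : Fin n → ℝ | ¬ θ ∈ Gs} = Gsᶜ := rfl
    rw [hc, measure_compl hGmeas (measure_ne_top μ _), hGone, measure_univ, tsub_self]
  have hae : ∀ᵐ θ ∂μ, ((finalSet wt θ x).card : ℝ)
      = ∑ v : Fin n, (B v).indicator (fun _ => (1:ℝ)) θ := by
    filter_upwards [hGae] with θ hθG
    have hθ : ∀ v, 0 < θ v ∧ θ v ≤ 1 := by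
      intro v
      have := hθG v (Set.mem_univ v)
      exact ⟨this.1, this.2⟩
    rw [hwt, hx, finalSet_eq hTne hw0 hθ, Finset.card_filter]
    push_cast
    apply Finset.sum_congr rfl
    intro v _
    rw [Set.indicator_apply]
    by_cases h : ∀ i < dd n T v, θ (v - ((i:ℕ) : Fin n)) ≤ w
    · rw [if_pos h, if_pos ((hBmem θ v).mpr h)]
    · rw [if_neg h, if_neg (fun hc => h ((hBmem θ v).mp hc))]
  have hint : (∫ θ, ((finalSet wt θ x).card : ℝ) ∂μ) = ∑ v : Fin n, w ^ dd n T v := by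
    rw [integral_congr_ae hae, integral_finset_sum]
    · apply Finset.sum_congr rfl
      intro v _
      rw [integral_indicator_const _ (hBmeas v), Measure.real, hμB v, smul_eq_mul, mul_one,
        ENNReal.toReal_ofReal (pow_nonneg hw0 _)]
    · intro v _
      exact (integrable_const (1:ℝ)).indicator (hBmeas v)
  have heqpart : (∫ θ, ((finalSet wt θ x).card : ℝ) ∂μ)
      = ∑ t ∈ T, ∑ i ∈ Finset.range (len t), w ^ i := by
    rw [hint, sum_dd_eq hTne (fun k => w ^ k)]
    exact Finset.sum_congr rfl (fun t _ => by rw [hlen t])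
  -- inequality part
  have hsumlen : ∑ t ∈ T, ((alen n T t : ℕ) : ℝ) = n := by
    have h1 := sum_dd_eq (T := T) hTne (fun _ => (1:ℝ))
    simp only [Finset.sum_const, Finset.card_univ, Fintype.card_fin, Finset.card_range,
      nsmul_eq_mul, mul_one] at h1
    exact h1.symm
  have hamgm : (K:ℝ) * w ^ ((n:ℝ)/(K:ℝ)) ≤ ∑ t ∈ T, w ^ (alen n T t) := by
    have h := Real.geom_mean_le_arith_mean_weighted T (fun _ => 1/(K:ℝ))
      (fun t => w ^ (alen n T t)) (fun i _ => by positivity)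
      (by rw [Finset.sum_const, hT, nsmul_eq_mul]; field_simp) (fun i _ => by positivity)
    have hprod : (∏ t ∈ T, ((w ^ (alen n T t)) ^ ((1:ℝ)/(K:ℝ)) : ℝ)) = w ^ ((n:ℝ)/(K:ℝ)) := by
      have hstep : ∀ t ∈ T, ((w ^ (alen n T t)) ^ ((1:ℝ)/(K:ℝ)) : ℝ)
          = w ^ (((alen n T t : ℕ) : ℝ) * (1/(K:ℝ))) := by
        intro t _
        rw [← Real.rpow_natCast w (alen n T t), ← Real.rpow_mul hw0]
      rw [Finset.prod_congr rfl hstep, ← Real.rpow_sum_of_pos hwpos, ← Finset.sum_mul,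
        hsumlen, mul_one_div]
    rw [hprod, ← Finset.mul_sum] at h
    have h2 := mul_le_mul_of_nonneg_left h (le_of_lt hKpos)
    rw [← mul_assoc] at h2
    have h3 : (K:ℝ) * (1/K) = 1 := by field_simp
    rw [h3, one_mul] at h2
    exact h2
  have hineq : (∑ t ∈ T, ∑ i ∈ Finset.range (len t), w ^ i)
      ≤ n * (1 - w ^ ((n:ℝ)/(K:ℝ))) := by
    have hgeom : ∀ ℓ : ℕ, (∑ i ∈ Finset.range ℓ, w ^ i) = (1 - w ^ ℓ)/(1 - w) := by
      intro ℓ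
      rw [geom_sum_eq (ne_of_lt hw1)]
      rw [div_eq_div_iff (by linarith) (by linarith)]
      ring
    have heq2 : (∑ t ∈ T, ∑ i ∈ Finset.range (len t), w ^ i)
        = ((K:ℝ) - ∑ t ∈ T, w ^ (alen n T t)) / (1 - w) := by
      rw [Finset.sum_congr rfl (fun t (_ : t ∈ T) => by rw [hlen t, hgeom (alen n T t)])]
      rw [← Finset.sum_div, Finset.sum_sub_distrib, Finset.sum_const, hT, nsmul_eq_mul, mul_one]
    rw [heq2, div_le_iff₀ (by linarith)]
    have h1w : 1 - w = (K:ℝ)/n := by rw [hwdef]; ring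
    calc (K:ℝ) - ∑ t ∈ T, w ^ alen n T t
        ≤ (K:ℝ) - (K:ℝ) * w ^ ((n:ℝ)/(K:ℝ)) := by linarith [hamgm]
      _ = (n:ℝ) * (1 - w ^ ((n:ℝ)/(K:ℝ))) * (1 - w) := by
          rw [h1w]; field_simp
  exact ⟨heqpart, hineq⟩
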